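/- Convexity of the critical energy of the relative equilibria: let b_0 < b_1 < … < b_ℓ be real numbers. (i) For every j = (j_0,…,j_ℓ) with j_σ > 0 for all σ, there exists a unique β < b_0 such that ∑_{σ=0}^{ℓ} j_σ/√(b_σ − β) = 1; denote this solution by β(j) and set ω_σ(j) = √(b_σ − β(j)). (ii) The function h(j) = ∑_{σ=0}^{ℓ} j_σ·( ω_σ(j) + b_σ/ω_σ(j) ) is convex on the open set { j ∈ ℝ^{ℓ+1} : j_σ > 0 for all σ }. -/

import Mathlib

open Finset

private lemma sqrt_tangent19 {u v : ℝ} (hu : 0 ≤ u) (hv : 0 < v) :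
    Real.sqrt u ≤ Real.sqrt v + (u - v) / (2 * Real.sqrt v) := by
  have hsv : 0 < Real.sqrt v := Real.sqrt_pos.mpr hv
  rw [← sub_le_iff_le_add', le_div_iff₀ (by positivity)]
  nlinarith [sq_nonneg (Real.sqrt u - Real.sqrt v), Real.sq_sqrt hu, Real.sq_sqrt hv.le]

private lemma key19 {n : ℕ} {b x : Fin n → ℝ} {β' β₀ : ℝ}
    (hx : ∀ σ, 0 ≤ x σ) (hb' : ∀ σ, β' < b σ) (hbs : ∀ σ, β₀ < b σ)
    (hc : ∑ σ, x σ / Real.sqrt (b σ - β₀) = 1) :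
    β' + 2 * ∑ σ, x σ * Real.sqrt (b σ - β') ≤
    β₀ + 2 * ∑ σ, x σ * Real.sqrt (b σ - β₀) := by
  have h1 : ∑ σ, x σ * Real.sqrt (b σ - β') ≤
      ∑ σ, (x σ * Real.sqrt (b σ - β₀) + (β₀ - β') / 2 * (x σ / Real.sqrt (b σ - β₀))) := by
    apply Finset.sum_le_sum
    intro σ _
    have hv : 0 < b σ - β₀ := by linarith [hbs σ]
    have hu : 0 ≤ b σ - β' := by linarith [hb' σ]
    have ht := sqrt_tangent19 hu hv
    have hsv : 0 < Real.sqrt (b σ - β₀) := Real.sqrt_pos.mpr hv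
    have h2 := mul_le_mul_of_nonneg_left ht (hx σ)
    calc x σ * Real.sqrt (b σ - β')
        ≤ x σ * (Real.sqrt (b σ - β₀) + (b σ - β' - (b σ - β₀)) / (2 * Real.sqrt (b σ - β₀))) := h2
      _ = x σ * Real.sqrt (b σ - β₀) + (β₀ - β') / 2 * (x σ / Real.sqrt (b σ - β₀)) := by
          field_simp
          ring
  rw [Finset.sum_add_distrib, ← Finset.mul_sum, hc] at h1
  linarith

private lemma hrw19 {n : ℕ} {b j : Fin n → ℝ} {β : ℝ}
    (hbβ : ∀ σ, β < b σ) (hc : ∑ σ, j σ / Real.sqrt (b σ - β) = 1) :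
    ∑ σ, j σ * (Real.sqrt (b σ - β) + b σ / Real.sqrt (b σ - β)) =
      β + 2 * ∑ σ, j σ * Real.sqrt (b σ - β) := by
  have h1 : ∀ σ : Fin n, j σ * (Real.sqrt (b σ - β) + b σ / Real.sqrt (b σ - β)) =
      2 * (j σ * Real.sqrt (b σ - β)) + β * (j σ / Real.sqrt (b σ - β)) := by
    intro σ
    have hv : 0 < b σ - β := by linarith [hbβ σ]
    have hs : 0 < Real.sqrt (b σ - β) := Real.sqrt_pos.mpr hv
    have hsq : Real.sqrt (b σ - β) ^ 2 = b σ - β := Real.sq_sqrt hv.le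
    field_simp
    linear_combination (-1 : ℝ) * j σ * hsq
  rw [Finset.sum_congr rfl (fun σ _ => h1 σ), Finset.sum_add_distrib,
    ← Finset.mul_sum, ← Finset.mul_sum, hc]
  ring

private lemma part_i19 {n : ℕ} (b : Fin (n + 1) → ℝ) (hb : StrictMono b)
    (j : Fin (n + 1) → ℝ) (hj : ∀ σ, 0 < j σ) :
    ∃! β : ℝ, β < b 0 ∧ ∑ σ, j σ / Real.sqrt (b σ - β) = 1 := by
  have hb0 : ∀ σ, b 0 ≤ b σ := fun σ => hb.monotone (Fin.zero_le σ)
  set f : ℝ → ℝ := fun β => ∑ σ, j σ / Real.sqrt (b σ - β) with hf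
  have hmono : StrictMonoOn f (Set.Iio (b 0)) := by
    intro β1 h1 β2 h2 hlt
    apply Finset.sum_lt_sum_of_nonempty Finset.univ_nonempty
    intro σ _
    have hv2 : 0 < b σ - β2 := by have := hb0 σ; simp only [Set.mem_Iio] at h2; linarith
    exact div_lt_div_of_pos_left (hj σ) (Real.sqrt_pos.mpr hv2)
      (Real.sqrt_lt_sqrt hv2.le (by linarith))
  have hcont : ContinuousOn f (Set.Iio (b 0)) := by
    apply continuousOn_finset_sum
    intro σ _
    apply ContinuousOn.div continuousOn_const
    · exact (Real.continuous_sqrt.comp (continuous_const.sub continuous_id)).continuousOn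
    · intro β hβ
      simp only [Set.mem_Iio] at hβ
      have : 0 < b σ - β := by have := hb0 σ; linarith
      exact ne_of_gt (Real.sqrt_pos.mpr this)
  set S : ℝ := ∑ σ, j σ with hS
  have hSpos : 0 < S := Finset.sum_pos (fun σ _ => hj σ) Finset.univ_nonempty
  have hj0S : j 0 ≤ S := Finset.single_le_sum (fun σ _ => (hj σ).le) (Finset.mem_univ 0)
  set β₁ : ℝ := b 0 - (S + 1) ^ 2 with hβ₁
  set β₂ : ℝ := b 0 - (j 0 / 2) ^ 2 with hβ₂
  have hβ₁lt : β₁ < b 0 := by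
    have h : 0 < (S+1)^2 := by positivity
    simp only [hβ₁]; linarith
  have hβ₂lt : β₂ < b 0 := by
    have h0 := hj 0
    have h : 0 < (j 0 / 2)^2 := by positivity
    simp only [hβ₂]; linarith
  have hβ₁₂ : β₁ ≤ β₂ := by
    have h0 := hj 0
    have : (j 0 / 2)^2 ≤ (S+1)^2 := by nlinarith
    simp only [hβ₁, hβ₂]; linarith
  have hfβ₁ : f β₁ < 1 := by
    have : f β₁ ≤ ∑ σ : Fin (n+1), j σ / (S + 1) := by
      apply Finset.sum_le_sum
      intro σ _
      apply div_le_div_of_nonneg_left (hj σ).le (by positivity)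
      calc (S + 1) = Real.sqrt ((S+1)^2) := by rw [Real.sqrt_sq (by positivity)]
        _ ≤ Real.sqrt (b σ - β₁) := Real.sqrt_le_sqrt (by have := hb0 σ; simp [hβ₁]; linarith)
    rw [← Finset.sum_div] at this
    have : f β₁ ≤ S / (S + 1) := this
    have h2 : S / (S + 1) < 1 := by rw [div_lt_one (by linarith)]; linarith
    linarith
  have hfβ₂ : 1 < f β₂ := by
    have h1 : j 0 / Real.sqrt (b 0 - β₂) ≤ f β₂ :=
      Finset.single_le_sum (f := fun σ => j σ / Real.sqrt (b σ - β₂))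
        (fun σ _ => div_nonneg (hj σ).le (Real.sqrt_nonneg _)) (Finset.mem_univ 0)
    have h2 : Real.sqrt (b 0 - β₂) = j 0 / 2 := by
      rw [show b 0 - β₂ = (j 0 / 2)^2 by simp [hβ₂]]
      exact Real.sqrt_sq (by have := hj 0; positivity)
    rw [h2] at h1
    have h3 : j 0 / (j 0 / 2) = 2 := by
      have := hj 0; field_simp
    rw [h3] at h1
    linarith
  have hIcc : Set.Icc β₁ β₂ ⊆ Set.Iio (b 0) := fun t ht => lt_of_le_of_lt ht.2 hβ₂lt
  have := intermediate_value_Icc hβ₁₂ (hcont.mono hIcc)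
  obtain ⟨β, hβmem, hβeq⟩ := this ⟨hfβ₁.le, hfβ₂.le⟩
  refine ⟨β, ⟨lt_of_le_of_lt hβmem.2 hβ₂lt, hβeq⟩, ?_⟩
  intro β' ⟨hβ'lt, hβ'eq⟩
  exact hmono.injOn (Set.mem_Iio.mpr hβ'lt) (Set.mem_Iio.mpr (lt_of_le_of_lt hβmem.2 hβ₂lt))
    (by show (∑ σ, j σ / Real.sqrt (b σ - β')) = f β; rw [hβ'eq, hβeq])

/-- **Convexity of the critical energy of the relative equilibria.**
Let `b_0 < … < b_ℓ`.
(i) For every `j` with all `j_σ > 0` there is a unique `β < b_0` with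
`∑_σ j_σ/√(b_σ − β) = 1`.
(ii) Denoting this solution by `β(j)` and setting `ω_σ(j) = √(b_σ − β(j))`, the critical
energy `h(j) = ∑_σ j_σ (ω_σ(j) + b_σ/ω_σ(j))` is a convex function on the positive
orthant `{j : ∀ σ, j_σ > 0}`. -/
theorem stmt19 (ℓ : ℕ) (b : Fin (ℓ + 1) → ℝ) (hb : StrictMono b) :
    (∀ j : Fin (ℓ + 1) → ℝ, (∀ σ, 0 < j σ) →
      ∃! β : ℝ, β < b 0 ∧ ∑ σ, j σ / Real.sqrt (b σ - β) = 1) ∧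
    (∀ βf : (Fin (ℓ + 1) → ℝ) → ℝ,
      (∀ j : Fin (ℓ + 1) → ℝ, (∀ σ, 0 < j σ) →
        βf j < b 0 ∧ ∑ σ, j σ / Real.sqrt (b σ - βf j) = 1) →
      ConvexOn ℝ {j : Fin (ℓ + 1) → ℝ | ∀ σ, 0 < j σ}
        (fun j => ∑ σ, j σ *
          (Real.sqrt (b σ - βf j) + b σ / Real.sqrt (b σ - βf j)))) := by
  have hb0 : ∀ σ, b 0 ≤ b σ := fun σ => hb.monotone (Fin.zero_le σ)
  constructor
  · exact part_i19 b hb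
  · intro βf hβf
    have hconv : Convex ℝ {j : Fin (ℓ + 1) → ℝ | ∀ σ, 0 < j σ} := by
      intro x hx y hy a c ha hc hac
      intro σ
      simp only [Pi.add_apply, Pi.smul_apply, smul_eq_mul]
      rcases lt_or_eq_of_le ha with h | h
      · have h1 := mul_pos h (hx σ)
        have h2 := mul_nonneg hc (hy σ).le
        linarith
      · have hc1 : c = 1 := by linarith
        have := hy σ
        rw [← h, hc1]
        simpa using this
    refine ⟨hconv, ?_⟩
    intro x hx y hy a c ha hc hac
    have hxσ : ∀ σ, 0 < x σ := hx
    have hyσ : ∀ σ, 0 < y σ := hy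
    have hz : ∀ σ, 0 < (a • x + c • y) σ := hconv hx hy ha hc hac
    obtain ⟨hβx, hcx⟩ := hβf x hxσ
    obtain ⟨hβy, hcy⟩ := hβf y hyσ
    obtain ⟨hβz, hcz⟩ := hβf _ hz
    set βz := βf (a • x + c • y) with hβzdef
    have hbz : ∀ σ, βz < b σ := fun σ => lt_of_lt_of_le hβz (hb0 σ)
    have hbx : ∀ σ, βf x < b σ := fun σ => lt_of_lt_of_le hβx (hb0 σ)
    have hby : ∀ σ, βf y < b σ := fun σ => lt_of_lt_of_le hβy (hb0 σ)
    -- rewrite all three energies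
    have hEz := hrw19 hbz hcz
    have hEx := hrw19 hbx hcx
    have hEy := hrw19 hby hcy
    simp only [smul_eq_mul]
    rw [hEz, hEx, hEy]
    -- split the sum for z
    have hsplit : ∑ σ, (a • x + c • y) σ * Real.sqrt (b σ - βz)
        = a * ∑ σ, x σ * Real.sqrt (b σ - βz) + c * ∑ σ, y σ * Real.sqrt (b σ - βz) := by
      rw [Finset.mul_sum, Finset.mul_sum, ← Finset.sum_add_distrib]
      apply Finset.sum_congr rfl
      intro σ _
      simp only [Pi.add_apply, Pi.smul_apply, smul_eq_mul]
      ring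
    have hkx : βz + 2 * ∑ σ, x σ * Real.sqrt (b σ - βz) ≤
        βf x + 2 * ∑ σ, x σ * Real.sqrt (b σ - βf x) :=
      key19 (fun σ => (hxσ σ).le) hbz hbx hcx
    have hky : βz + 2 * ∑ σ, y σ * Real.sqrt (b σ - βz) ≤
        βf y + 2 * ∑ σ, y σ * Real.sqrt (b σ - βf y) :=
      key19 (fun σ => (hyσ σ).le) hbz hby hcy
    have h1 := mul_le_mul_of_nonneg_left hkx ha
    have h2 := mul_le_mul_of_nonneg_left hky hc
    rw [hsplit]
    have hβc : a * βz + c * βz = βz := by rw [← add_mul, hac, one_mul]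
    nlinarith [h1, h2, hβc]
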